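/- Let θ ∈ (−π/2, π/2), r > 0, d > 0, M > 0 be reals. Then ∫ x in (−M*d/(2*r))..(M*d/(2*r)), 1/(1 − 2*x*sin θ + x²) dx = (1/cos θ) * (arctan (M*d/(2*r*cos θ) − tan θ) + arctan (M*d/(2*r*cos θ) + tan θ)). -/

import Mathlib

open Real

theorem integral_snr_closed_form (θ r d M : ℝ)
    (hθ : θ ∈ Set.Ioo (-(π / 2)) (π / 2)) (hr : r > 0) (hd : d > 0) (hM : M > 0) :
    ∫ x in (-(M * d / (2 * r)))..(M * d / (2 * r)), 1 / (1 - 2 * x * sin θ + x ^ 2) =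
      (1 / cos θ) * (arctan (M * d / (2 * r * cos θ) - tan θ) +
        arctan (M * d / (2 * r * cos θ) + tan θ)) := by
  obtain ⟨h1, h2⟩ := hθ
  have hc : 0 < cos θ := Real.cos_pos_of_mem_Ioo ⟨h1, h2⟩
  have hc' : cos θ ≠ 0 := ne_of_gt hc
  have hpyth := sin_sq_add_cos_sq θ
  set b := M * d / (2 * r) with hb
  have hden : ∀ x : ℝ, 1 - 2 * x * sin θ + x ^ 2 = (x - sin θ) ^ 2 + cos θ ^ 2 := by
    intro x; nlinarith [hpyth]
  have hdpos : ∀ x : ℝ, 0 < 1 - 2 * x * sin θ + x ^ 2 := by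
    intro x; rw [hden x]; positivity
  have key : ∀ x : ℝ, HasDerivAt (fun x => (1 / cos θ) * arctan ((x - sin θ) / cos θ))
      (1 / (1 - 2 * x * sin θ + x ^ 2)) x := by
    intro x
    have h : HasDerivAt (fun x : ℝ => (x - sin θ) / cos θ) (1 / cos θ) x := by
      simpa using ((hasDerivAt_id x).sub_const (sin θ)).div_const (cos θ)
    have h2' := (Real.hasDerivAt_arctan ((x - sin θ) / cos θ)).comp x h
    have h3 := h2'.const_mul (1 / cos θ)
    refine h3.congr_deriv ?_
    have hne : (1 + ((x - sin θ) / cos θ) ^ 2) ≠ 0 := by positivity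
    rw [hden x]
    field_simp
    ring
  have hcont : Continuous fun x : ℝ => 1 / (1 - 2 * x * sin θ + x ^ 2) := by
    apply continuous_const.div (by continuity)
    intro x; exact ne_of_gt (hdpos x)
  have := intervalIntegral.integral_eq_sub_of_hasDerivAt
    (f := fun x => (1 / cos θ) * arctan ((x - sin θ) / cos θ))
    (a := -b) (b := b) (fun x _ => key x) (hcont.intervalIntegrable _ _)
  rw [this]
  have e1 : (b - sin θ) / cos θ = M * d / (2 * r * cos θ) - tan θ := by
    rw [tan_eq_sin_div_cos, hb]; field_simp
  have e2 : (-b - sin θ) / cos θ = -(M * d / (2 * r * cos θ) + tan θ) := by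
    rw [tan_eq_sin_div_cos, hb]; field_simp; ring
  simp only [e1, e2, arctan_neg]
  ring
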